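/- Let κ > 0 and ρ > 0, and let f : ℝ → ℝ be twice continuously differentiable on [−ρ, ρ] with f(s) ≥ 0 and f″(s) ≥ κ²·f(s) for all s ∈ [−ρ, ρ]. Define E(T) := ∫_{−ρ+T}^{ρ−T} f(s) ds for T ∈ [0, ρ]. Then E(T) ≤ e^{−κT}·E(0) for all T ∈ [0, ρ]. -/

import Mathlib

open MeasureTheory intervalIntegral Set Real Topology

/-- Exponential decay of the energy of the middle portion of a strip: if `f ≥ 0` and
`f'' ≥ κ²·f` on `[−ρ, ρ]`, then `E(T) := ∫_{−ρ+T}^{ρ−T} f ≤ e^{−κT}·E(0)` for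
`T ∈ [0, ρ]`. -/
theorem stmt_6
    (κ ρ : ℝ) (hκ : 0 < κ) (hρ : 0 < ρ) (f f' f'' : ℝ → ℝ)
    (hd1 : ∀ s ∈ Set.Icc (-ρ) ρ, HasDerivAt f (f' s) s)
    (hd2 : ∀ s ∈ Set.Icc (-ρ) ρ, HasDerivAt f' (f'' s) s)
    (hcont : ContinuousOn f'' (Set.Icc (-ρ) ρ))
    (hpos : ∀ s ∈ Set.Icc (-ρ) ρ, 0 ≤ f s)
    (hconv : ∀ s ∈ Set.Icc (-ρ) ρ, κ ^ 2 * f s ≤ f'' s) :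
    ∀ T ∈ Set.Icc 0 ρ,
      (∫ s in (-ρ + T)..(ρ - T), f s) ≤ Real.exp (-κ * T) * ∫ s in (-ρ)..ρ, f s := by
  have hρρ : -ρ ≤ ρ := by linarith
  have hfc : ContinuousOn f (Set.Icc (-ρ) ρ) :=
    fun s hs => (hd1 s hs).continuousAt.continuousWithinAt
  have hfc' : ContinuousOn f' (Set.Icc (-ρ) ρ) :=
    fun s hs => (hd2 s hs).continuousAt.continuousWithinAt
  set F : ℝ → ℝ := fun x => ∫ s in (-ρ)..x, f s with hFdef
  have hint : ∀ a b, a ∈ Set.Icc (-ρ) ρ → b ∈ Set.Icc (-ρ) ρ →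
      IntervalIntegrable f volume a b := fun a b ha hb =>
    (hfc.mono (Set.uIcc_subset_Icc ha hb)).intervalIntegrable
  have hmemL : ∀ T ∈ Set.Icc (0:ℝ) ρ, -ρ + T ∈ Set.Icc (-ρ) ρ := by
    intro T hT; exact ⟨by linarith [hT.1], by linarith [hT.2]⟩
  have hmemR : ∀ T ∈ Set.Icc (0:ℝ) ρ, ρ - T ∈ Set.Icc (-ρ) ρ := by
    intro T hT; exact ⟨by linarith [hT.2], by linarith [hT.1]⟩
  -- E T = F (ρ - T) - F (-ρ + T)
  have hE : ∀ T ∈ Set.Icc (0:ℝ) ρ,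
      (∫ s in (-ρ + T)..(ρ - T), f s) = F (ρ - T) - F (-ρ + T) := by
    intro T hT
    rw [hFdef]
    exact (intervalIntegral.integral_interval_sub_left
      (hint _ _ (Set.left_mem_Icc.2 hρρ) (hmemR T hT))
      (hint _ _ (Set.left_mem_Icc.2 hρρ) (hmemL T hT))).symm
  -- derivative of F on the open interval
  have hmeas : ∀ x ∈ Set.Ioo (-ρ) ρ, StronglyMeasurableAtFilter f (𝓝 x) volume :=
    ContinuousAt.stronglyMeasurableAtFilter isOpen_Ioo
      (fun x hx => (hd1 x (Set.Ioo_subset_Icc_self hx)).continuousAt)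
  have hF : ∀ x ∈ Set.Ioo (-ρ) ρ, HasDerivAt F (f x) x := fun x hx =>
    intervalIntegral.integral_hasDerivAt_right
      (hint _ _ (Set.left_mem_Icc.2 hρρ) (Set.Ioo_subset_Icc_self hx))
      (hmeas x hx) (hd1 x (Set.Ioo_subset_Icc_self hx)).continuousAt
  -- continuity of F on Icc
  have hFc : ContinuousOn F (Set.Icc (-ρ) ρ) := by
    have h_int : IntegrableOn f (Set.uIcc (-ρ) ρ) volume := by
      rw [Set.uIcc_of_le hρρ]
      exact hfc.integrableOn_Icc
    simpa [Set.uIcc_of_le hρρ] using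
      intervalIntegral.continuousOn_primitive_interval (μ := volume) h_int
  -- maps
  have hmapR : Set.MapsTo (fun T : ℝ => ρ - T) (Set.Icc 0 ρ) (Set.Icc (-ρ) ρ) :=
    fun T hT => hmemR T hT
  have hmapL : Set.MapsTo (fun T : ℝ => -ρ + T) (Set.Icc 0 ρ) (Set.Icc (-ρ) ρ) :=
    fun T hT => hmemL T hT
  have hcontR : ContinuousOn (fun T : ℝ => ρ - T) (Set.Icc 0 ρ) :=
    (continuous_const.sub continuous_id).continuousOn
  have hcontL : ContinuousOn (fun T : ℝ => -ρ + T) (Set.Icc 0 ρ) :=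
    (continuous_const.add continuous_id).continuousOn
  -- Step A : κ (F(ρ-T) - F(-ρ+T)) ≤ f(ρ-T) + f(-ρ+T) on Icc 0 ρ
  set G : ℝ → ℝ := fun T =>
    Real.exp (-κ * T) * (κ * (F (ρ - T) - F (-ρ + T)) - f (ρ - T) - f (-ρ + T)) with hGdef
  have hGderiv : ∀ T ∈ Set.Ioo (0:ℝ) ρ, HasDerivAt G
      (Real.exp (-κ * T) * ((f' (ρ - T) - f' (-ρ + T))
        - κ ^ 2 * (F (ρ - T) - F (-ρ + T)))) T := by
    intro T hT
    have hTIcc : T ∈ Set.Icc (0:ℝ) ρ := Set.Ioo_subset_Icc_self hT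
    have hbo : ρ - T ∈ Set.Ioo (-ρ) ρ := ⟨by linarith [hT.2], by linarith [hT.1]⟩
    have hao : -ρ + T ∈ Set.Ioo (-ρ) ρ := ⟨by linarith [hT.1], by linarith [hT.2]⟩
    have hinR : HasDerivAt (fun T : ℝ => ρ - T) (-1) T := by
      simpa using (hasDerivAt_id T).const_sub ρ
    have hinL : HasDerivAt (fun T : ℝ => -ρ + T) 1 T := by
      simpa using (hasDerivAt_id T).const_add (-ρ)
    have hFR : HasDerivAt (fun T : ℝ => F (ρ - T)) (f (ρ - T) * (-1)) T :=
      (hF _ hbo).comp T hinR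
    have hFL : HasDerivAt (fun T : ℝ => F (-ρ + T)) (f (-ρ + T) * 1) T :=
      (hF _ hao).comp T hinL
    have hfR : HasDerivAt (fun T : ℝ => f (ρ - T)) (f' (ρ - T) * (-1)) T :=
      (hd1 _ (Set.Ioo_subset_Icc_self hbo)).comp T hinR
    have hfL : HasDerivAt (fun T : ℝ => f (-ρ + T)) (f' (-ρ + T) * 1) T :=
      (hd1 _ (Set.Ioo_subset_Icc_self hao)).comp T hinL
    have hexp : HasDerivAt (fun T : ℝ => Real.exp (-κ * T))
        (Real.exp (-κ * T) * (-κ)) T := by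
      simpa using ((hasDerivAt_id T).const_mul (-κ)).exp
    have hu : HasDerivAt (fun T : ℝ =>
        κ * (F (ρ - T) - F (-ρ + T)) - f (ρ - T) - f (-ρ + T))
        (κ * (f (ρ - T) * (-1) - f (-ρ + T) * 1) - f' (ρ - T) * (-1)
          - f' (-ρ + T) * 1) T :=
      (((hFR.sub hFL).const_mul κ).sub hfR).sub hfL
    have := hexp.fun_mul hu
    refine this.congr_deriv ?_
    ring
  have hGmono : MonotoneOn G (Set.Icc 0 ρ) := by
    apply monotoneOn_of_deriv_nonneg (convex_Icc 0 ρ)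
    · apply ContinuousOn.mul (Real.continuous_exp.comp
        (continuous_const.mul continuous_id)).continuousOn
      exact (((((hFc.comp hcontR hmapR).sub (hFc.comp hcontL hmapL)).const_smul κ).sub
        (hfc.comp hcontR hmapR)).sub (hfc.comp hcontL hmapL))
    · intro T hT
      rw [interior_Icc] at hT
      exact (hGderiv T hT).differentiableAt.differentiableWithinAt
    · intro T hT
      rw [interior_Icc] at hT
      rw [(hGderiv T hT).deriv]
      have hTIcc : T ∈ Set.Icc (0:ℝ) ρ := Set.Ioo_subset_Icc_self hT
      have hab : -ρ + T ≤ ρ - T := by linarith [hT.2]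
      have hsub : Set.uIcc (-ρ + T) (ρ - T) ⊆ Set.Icc (-ρ) ρ :=
        Set.uIcc_subset_Icc (hmemL T hTIcc) (hmemR T hTIcc)
      have hintf'' : IntervalIntegrable f'' volume (-ρ + T) (ρ - T) :=
        (hcont.mono hsub).intervalIntegrable
      have hftc : (∫ s in (-ρ + T)..(ρ - T), f'' s) = f' (ρ - T) - f' (-ρ + T) :=
        intervalIntegral.integral_eq_sub_of_hasDerivAt
          (fun x hx => hd2 x (hsub hx)) hintf''
      have hmono : (∫ s in (-ρ + T)..(ρ - T), κ ^ 2 * f s)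
          ≤ ∫ s in (-ρ + T)..(ρ - T), f'' s := by
        apply intervalIntegral.integral_mono_on hab
          (((hfc.mono hsub).const_smul (κ^2)).intervalIntegrable) hintf''
        intro x hx
        exact hconv x (hsub (by rw [Set.uIcc_of_le hab]; exact hx))
      rw [intervalIntegral.integral_const_mul] at hmono
      rw [hE T hTIcc] at hmono
      have h1 : 0 ≤ (f' (ρ - T) - f' (-ρ + T)) - κ ^ 2 * (F (ρ - T) - F (-ρ + T)) := by
        rw [← hftc]; linarith
      positivity
  -- G ρ ≤ 0
  have hGρ : G ρ ≤ 0 := by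
    have h0 : (0:ℝ) ∈ Set.Icc (-ρ) ρ := ⟨by linarith, by linarith⟩
    have : G ρ = Real.exp (-κ * ρ) * (-2 * f 0) := by
      rw [hGdef]; norm_num; ring_nf
    rw [this]
    have := hpos 0 h0
    nlinarith [Real.exp_pos (-κ * ρ)]
  have hstepA : ∀ T ∈ Set.Icc (0:ℝ) ρ,
      κ * (F (ρ - T) - F (-ρ + T)) - f (ρ - T) - f (-ρ + T) ≤ 0 := by
    intro T hT
    have := hGmono hT (Set.right_mem_Icc.2 hρ.le) hT.2
    have hG0 : G T ≤ 0 := le_trans this hGρ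
    simp only [hGdef] at hG0
    nlinarith [Real.exp_pos (-κ * T)]
  -- Step B : K := exp(κT) * E(T) is antitone
  set K : ℝ → ℝ := fun T => Real.exp (κ * T) * (F (ρ - T) - F (-ρ + T)) with hKdef
  have hKderiv : ∀ T ∈ Set.Ioo (0:ℝ) ρ, HasDerivAt K
      (Real.exp (κ * T) * (κ * (F (ρ - T) - F (-ρ + T)) - f (ρ - T) - f (-ρ + T))) T := by
    intro T hT
    have hbo : ρ - T ∈ Set.Ioo (-ρ) ρ := ⟨by linarith [hT.2], by linarith [hT.1]⟩
    have hao : -ρ + T ∈ Set.Ioo (-ρ) ρ := ⟨by linarith [hT.1], by linarith [hT.2]⟩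
    have hinR : HasDerivAt (fun T : ℝ => ρ - T) (-1) T := by
      simpa using (hasDerivAt_id T).const_sub ρ
    have hinL : HasDerivAt (fun T : ℝ => -ρ + T) 1 T := by
      simpa using (hasDerivAt_id T).const_add (-ρ)
    have hFR : HasDerivAt (fun T : ℝ => F (ρ - T)) (f (ρ - T) * (-1)) T :=
      (hF _ hbo).comp T hinR
    have hFL : HasDerivAt (fun T : ℝ => F (-ρ + T)) (f (-ρ + T) * 1) T :=
      (hF _ hao).comp T hinL
    have hexp : HasDerivAt (fun T : ℝ => Real.exp (κ * T))
        (Real.exp (κ * T) * κ) T := by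
      simpa using ((hasDerivAt_id T).const_mul κ).exp
    have := hexp.fun_mul (hFR.fun_sub hFL)
    refine this.congr_deriv ?_
    ring
  have hKanti : AntitoneOn K (Set.Icc 0 ρ) := by
    apply antitoneOn_of_deriv_nonpos (convex_Icc 0 ρ)
    · exact ContinuousOn.mul (Real.continuous_exp.comp
        (continuous_const.mul continuous_id)).continuousOn
        ((hFc.comp hcontR hmapR).sub (hFc.comp hcontL hmapL))
    · intro T hT
      rw [interior_Icc] at hT
      exact (hKderiv T hT).differentiableAt.differentiableWithinAt
    · intro T hT
      rw [interior_Icc] at hT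
      rw [(hKderiv T hT).deriv]
      have := hstepA T (Set.Ioo_subset_Icc_self hT)
      have he := Real.exp_pos (κ * T)
      nlinarith
  -- conclusion
  intro T hT
  have hK0 : K T ≤ K 0 := hKanti (Set.left_mem_Icc.2 hρ.le) hT hT.1
  have hK0val : K 0 = ∫ s in (-ρ)..ρ, f s := by
    rw [hKdef]
    simp [hFdef, intervalIntegral.integral_same]
  rw [hK0val, hKdef] at hK0
  rw [hE T hT]
  have hepos := Real.exp_pos (κ * T)
  have : Real.exp (-κ * T) * (Real.exp (κ * T) * (F (ρ - T) - F (-ρ + T)))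
      ≤ Real.exp (-κ * T) * ∫ s in (-ρ)..ρ, f s :=
    mul_le_mul_of_nonneg_left hK0 (Real.exp_pos _).le
  calc F (ρ - T) - F (-ρ + T)
      = Real.exp (-κ * T) * (Real.exp (κ * T) * (F (ρ - T) - F (-ρ + T))) := by
        rw [← mul_assoc, ← Real.exp_add]; ring_nf; simp
    _ ≤ _ := this
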